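/- If A = I − E is an n×n real matrix with |e_{ij}| ≤ ε for all 1 ≤ i,j ≤ n, where ε ≥ 0, then det(A) ≤ (1 + 2ε + nε²)^{n/2}. No upper restriction on ε is required. -/

import Mathlib

open Matrix Finset

/-- If `A = I - E` with `|e i j| ≤ ε` for all `i, j`, where `ε ≥ 0`, then
`det A ≤ (1 + 2 ε + n ε²) ^ (n/2)` (real power). No upper restriction on `ε`. -/
theorem det_upper_bound_full
    (n : ℕ) (hn : 1 ≤ n) (ε : ℝ) (hε : 0 ≤ ε)
    (E A : Matrix (Fin n) (Fin n) ℝ)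
    (hA : A = 1 - E)
    (hE : ∀ i j, |E i j| ≤ ε) :
    A.det ≤ (1 + 2 * ε + (n : ℝ) * ε ^ 2) ^ ((n : ℝ) / 2) := by
  have hn1 : (1 : ℝ) ≤ (n : ℝ) := by exact_mod_cast hn
  set c : ℝ := 1 + 2 * ε + (n : ℝ) * ε ^ 2 with hc
  have hc1 : (1 : ℝ) ≤ c := by nlinarith [sq_nonneg ε]
  have hc0 : (0 : ℝ) ≤ c := by linarith
  set M := A * Aᴴ with hMdef
  have hpsd : M.PosSemidef := Matrix.posSemidef_self_mul_conjTranspose A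
  have hherm : M.IsHermitian := hpsd.isHermitian
  set μ := hherm.eigenvalues with hμ
  have hμ0 : ∀ i, 0 ≤ μ i := hpsd.eigenvalues_nonneg
  -- entrywise bound on A
  have hAentry : ∀ i j, (A i j) ^ 2 ≤ ε ^ 2 + (if j = i then 1 + 2 * ε else 0) := by
    intro i j
    rcases eq_or_ne j i with h | h
    · subst h
      have : A j j = 1 - E j j := by simp [hA, Matrix.sub_apply, Matrix.one_apply]
      rw [this]
      have h := abs_le.mp (hE j j)
      rw [if_pos rfl]
      nlinarith [h.1, h.2, sq_nonneg (ε - E j j), sq_nonneg (ε + E j j)]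
    · have : A i j = -E i j := by
        simp [hA, Matrix.sub_apply, Matrix.one_apply, Ne.symm h]
      rw [this, if_neg h]
      have h1 : (E i j) ^ 2 ≤ ε ^ 2 := by
        have := hE i j
        nlinarith [abs_le.mp (hE i j)]
      simpa using h1
  -- trace bound
  have htr : M.trace ≤ (n : ℝ) * c := by
    rw [Matrix.trace]
    have hdiag : ∀ i, M.diag i ≤ c := by
      intro i
      have : M.diag i = ∑ j, (A i j) ^ 2 := by
        simp [Matrix.diag, hMdef, Matrix.mul_apply, Matrix.conjTranspose_apply, sq]
      rw [this]
      calc ∑ j, (A i j) ^ 2 ≤ ∑ j, (ε ^ 2 + (if j = i then 1 + 2 * ε else 0)) :=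
            Finset.sum_le_sum fun j _ => hAentry i j
        _ = c := by
            rw [Finset.sum_add_distrib, Finset.sum_const, Finset.sum_ite_eq' _ i]
            simp [hc]
            ring
    calc ∑ i, M.diag i ≤ ∑ _i : Fin n, c := Finset.sum_le_sum fun i _ => hdiag i
      _ = (n : ℝ) * c := by simp [Finset.sum_const, mul_comm]
  -- trace = sum of eigenvalues
  have htr_eq : M.trace = ∑ i, μ i := by
    conv_lhs => rw [hherm.spectral_theorem]
    rw [Unitary.conjStarAlgAut_apply, Matrix.trace_mul_cycle]
    rw [(Matrix.mem_unitaryGroup_iff').mp (Matrix.IsHermitian.eigenvectorUnitary hherm).2]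
    simp [Matrix.trace_diagonal, hμ]
  -- det M = product of eigenvalues
  have hdet_eq : M.det = ∏ i, μ i := by
    have := hherm.det_eq_prod_eigenvalues
    simpa using this
  -- AM-GM
  have hamgm : ∏ i, μ i ≤ c ^ n := by
    have hw' : (0:ℝ) < ∑ _i : Fin n, (1:ℝ) := by
      simp only [Finset.sum_const, Finset.card_univ, Fintype.card_fin, nsmul_eq_mul, mul_one]
      linarith
    have h := Real.geom_mean_le_arith_mean Finset.univ (fun _ => 1) μ
      (fun _ _ => zero_le_one) hw' (fun i _ => hμ0 i)
    simp only [Real.rpow_one, Finset.sum_const, Finset.card_univ, Fintype.card_fin,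
      nsmul_eq_mul, mul_one, one_mul] at h
    -- h : (∏ i, μ i) ^ ((n:ℝ))⁻¹ ≤ (∑ i, μ i) / n
    have hp0 : (0:ℝ) ≤ ∏ i, μ i := Finset.prod_nonneg fun i _ => hμ0 i
    have hsum : (∑ i, μ i) / (n:ℝ) ≤ c := by
      rw [div_le_iff₀ (by linarith)]
      calc ∑ i, μ i = M.trace := htr_eq.symm
        _ ≤ (n:ℝ) * c := htr
        _ = c * n := mul_comm _ _
    have h2 : ((∏ i, μ i) ^ ((n:ℝ))⁻¹) ^ (n:ℝ) ≤ c ^ (n:ℝ) :=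
      Real.rpow_le_rpow (Real.rpow_nonneg hp0 _) (h.trans hsum) (by linarith)
    rw [← Real.rpow_mul hp0, inv_mul_cancel₀ (by linarith : (n:ℝ) ≠ 0), Real.rpow_one,
      Real.rpow_natCast] at h2
    exact h2
  -- (det A)^2 = det M
  have hdetA : A.det ^ 2 = M.det := by
    rw [hMdef, Matrix.det_mul, Matrix.det_conjTranspose]
    simp [sq]
  -- conclude
  have hsq : A.det ^ 2 ≤ c ^ n := by rw [hdetA, hdet_eq]; exact hamgm
  have h1 : A.det ≤ Real.sqrt (c ^ n) := by
    have := Real.sqrt_le_sqrt hsq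
    rw [Real.sqrt_sq_eq_abs] at this
    exact (le_abs_self _).trans this
  have h2 : Real.sqrt (c ^ n) = c ^ ((n:ℝ) / 2) := by
    rw [Real.sqrt_eq_rpow, ← Real.rpow_natCast c n, ← Real.rpow_mul hc0]
    ring_nf
  rw [← h2]
  exact h1
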